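/- Let $\Delta$ be a pure $d$-dimensional simplicial complex. If $\Delta$ is a unit interval simplicial complex, then $\Delta$ is a proper interval simplicial complex (with the same labelling), and moreover with that labelling, for each facet $F: i_1 \dots i_{d+1}$ and each $j \notin F$ with $i_1 \leq j \leq i_{d+1}$, for every $k \in \{1, \dots, d+1\}$ there exists a facet containing both $j$ and $i_k$. -/
import Mathlib


/-- Unit interval condition (w.r.t. the natural labelling) for the facet family `F` of a
pure `d`-complex on `[n]`: whenever `s : i₁ < … < i_{d+1}` is a facet and
`i₁ ≤ j₁ < … < j_{d+1} ≤ i_{d+1}`, the set `{j₁, …, j_{d+1}}` is a facet. -/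
def UnitIntervalCond {n : ℕ} (d : ℕ) (F : Finset (Finset (Fin n))) : Prop :=
  ∀ s ∈ F, ∀ t : Finset (Fin n), t.card = d + 1 →
    (∃ a ∈ s, ∃ b ∈ s, ∀ j ∈ t, a ≤ j ∧ j ≤ b) → t ∈ F

/-- Proper interval condition (w.r.t. the natural labelling): for each facet
`s : i₁ < … < i_{d+1}` and each `j ∉ s` with `i₁ ≤ j ≤ i_{d+1}`, if some facet contains
both `j` and `i_k`, then `{i₁, …, î_k, …, i_{d+1}, j}` is a facet. -/
def ProperIntervalCond {n : ℕ} (d : ℕ) (F : Finset (Finset (Fin n))) : Prop :=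
  ∀ s ∈ F, ∀ j : Fin n, j ∉ s → (∃ a ∈ s, a ≤ j) → (∃ b ∈ s, j ≤ b) →
    ∀ k ∈ s, (∃ H ∈ F, j ∈ H ∧ k ∈ H) → insert j (s.erase k) ∈ F

/-- a unit interval complex is proper interval with the same labelling, and
moreover for each facet `s`, each `j ∉ s` between the least and the greatest vertex of
`s`, and every vertex `k` of `s`, there is a facet containing both `j` and `k`. -/
theorem stmt_4 (d n : ℕ) (F : Finset (Finset (Fin n)))
    (hpure : ∀ s ∈ F, s.card = d + 1)
    (hunit : UnitIntervalCond d F) :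
    ProperIntervalCond d F ∧
      ∀ s ∈ F, ∀ j : Fin n, j ∉ s → (∃ a ∈ s, a ≤ j) → (∃ b ∈ s, j ≤ b) →
        ∀ k ∈ s, ∃ H ∈ F, j ∈ H ∧ k ∈ H := by
  have key : ∀ s ∈ F, ∀ j : Fin n, j ∉ s → (∃ a ∈ s, a ≤ j) → (∃ b ∈ s, j ≤ b) →
      ∀ m ∈ s, insert j (s.erase m) ∈ F := by
    rintro s hs j hj ⟨a, ha, haj⟩ ⟨b, hb, hjb⟩ m hm
    have hsne : s.Nonempty := ⟨a, ha⟩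
    apply hunit s hs
    · rw [Finset.card_insert_of_notMem (fun h => hj (Finset.mem_of_mem_erase h)),
        Finset.card_erase_of_mem hm, hpure s hs]
      omega
    · refine ⟨s.min' hsne, Finset.min'_mem _ _, s.max' hsne, Finset.max'_mem _ _, ?_⟩
      intro x hx
      rcases Finset.mem_insert.mp hx with rfl | hx
      · exact ⟨le_trans (Finset.min'_le s a ha) haj, le_trans hjb (Finset.le_max' s b hb)⟩
      · have hxs := Finset.mem_of_mem_erase hx
        exact ⟨Finset.min'_le s x hxs, Finset.le_max' s x hxs⟩
  constructor
  · intro s hs j hj ha hb k hk _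
    exact key s hs j hj ha hb k hk
  · intro s hs j hj ha hb k hk
    rcases (s.erase k).eq_empty_or_nonempty with he | ⟨m, hm⟩
    · exfalso
      obtain ⟨a, ha', haj⟩ := ha; obtain ⟨b, hb', hjb⟩ := hb
      have hk' : ∀ x ∈ s, x = k := by
        intro x hx
        by_contra hne
        exact absurd (Finset.mem_erase.mpr ⟨hne, hx⟩) (by simp [he])
      have hjk : j = k := le_antisymm (hk' b hb' ▸ hjb) (hk' a ha' ▸ haj)
      exact hj (hjk ▸ hk)
    · refine ⟨insert j (s.erase m), key s hs j hj ha hb m (Finset.mem_of_mem_erase hm),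
        Finset.mem_insert_self _ _, Finset.mem_insert.mpr (Or.inr
          (Finset.mem_erase.mpr ⟨Ne.symm (Finset.mem_erase.mp hm).1, hk⟩))⟩
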